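/- Strang splitting is second-order accurate for bounded linear operators: ‖e^{Δt(A+B)} − e^{(Δt/2)A} e^{ΔtB} e^{(Δt/2)A}‖ ≤ C Δt³ for Δt ∈ [0,1], with C depending only on ‖A‖, ‖B‖. -/

import Mathlib

set_option maxHeartbeats 4000000
set_option synthInstance.maxHeartbeats 400000

open NormedSpace Nat

section Aux

lemma strang_real_exp_tsum (x : ℝ) : Real.exp x = ∑' n : ℕ, x ^ n / (n ! : ℝ) := by
  rw [Real.exp_eq_exp_ℝ, exp_eq_tsum_div]

lemma strang_tail_le (x : ℝ) (hx : 0 ≤ x) :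
    (∑' n : ℕ, x ^ (n + 3) / ((n + 3)! : ℝ)) ≤ Real.exp x := by
  have hs := Real.summable_pow_div_factorial x
  have h := Summable.sum_add_tsum_nat_add (f := fun n => x ^ n / (n ! : ℝ)) 3 hs
  rw [strang_real_exp_tsum x, ← h]
  have : (0:ℝ) ≤ ∑ i ∈ Finset.range 3, x ^ i / (i ! : ℝ) := by
    apply Finset.sum_nonneg; intro i _; positivity
  linarith

lemma strang_quad_le_exp (x : ℝ) (hx : 0 ≤ x) : 1 + x + x ^ 2 / 2 ≤ Real.exp x := by
  have h := Real.sum_le_exp_of_nonneg hx 3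
  simp [Finset.sum_range_succ] at h
  linarith

variable {X : Type} [NormedAddCommGroup X] [NormedSpace ℝ X]

lemma strang_norm_one_le : ‖(1 : X →L[ℝ] X)‖ ≤ 1 := by
  simpa [ContinuousLinearMap.one_def] using (ContinuousLinearMap.norm_id_le (E := X))

lemma strang_norm_pow_le (M : X →L[ℝ] X) (n : ℕ) : ‖M ^ n‖ ≤ ‖M‖ ^ n := by
  induction n with
  | zero => simpa using strang_norm_one_le
  | succ k ih =>
      calc ‖M ^ (k+1)‖ = ‖M ^ k * M‖ := by rw [pow_succ]
      _ ≤ ‖M ^ k‖ * ‖M‖ := norm_mul_le _ _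
      _ ≤ ‖M‖ ^ k * ‖M‖ := by gcongr
      _ = ‖M‖ ^ (k+1) := (pow_succ _ _).symm

variable [CompleteSpace X]

lemma strang_norm_exp_le (M : X →L[ℝ] X) : ‖exp M‖ ≤ Real.exp ‖M‖ := by
  rw [exp_eq_tsum ℝ]
  refine (norm_tsum_le_tsum_norm (norm_expSeries_summable' M)).trans ?_
  rw [strang_real_exp_tsum]
  refine Summable.tsum_le_tsum (fun n => ?_) (norm_expSeries_summable' M)
    (Real.summable_pow_div_factorial _)
  rw [norm_smul (((n ! : ℝ))⁻¹) (M ^ n), Real.norm_eq_abs,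
    abs_of_nonneg (by positivity : (0:ℝ) ≤ ((n ! : ℝ))⁻¹), div_eq_inv_mul]
  exact mul_le_mul_of_nonneg_left (strang_norm_pow_le M n) (by positivity)

lemma strang_exp_taylor2 (M : X →L[ℝ] X) {t : ℝ} (ht0 : 0 ≤ t) (ht1 : t ≤ 1) :
    ‖exp (t • M) - (1 + t • M + (t ^ 2 / 2) • (M * M))‖ ≤ t ^ 3 * Real.exp ‖M‖ := by
  have hf : Summable (fun n => ((n ! : ℝ))⁻¹ • (t • M) ^ n) := expSeries_summable' (t • M)
  have h3 : ∑ n ∈ Finset.range 3, ((n ! : ℝ))⁻¹ • (t • M) ^ n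
      = 1 + t • M + (t ^ 2 / 2) • (M * M) := by
    simp [Finset.sum_range_succ, smul_pow, smul_smul, pow_two]
    match_scalars <;> ring
  have key : exp (t • M) - (1 + t • M + (t ^ 2 / 2) • (M * M))
      = ∑' n, ((n+3)! : ℝ)⁻¹ • (t • M) ^ (n + 3) := by
    rw [exp_eq_tsum ℝ]
    beta_reduce
    rw [← Summable.sum_add_tsum_nat_add 3 hf, ← h3, add_sub_cancel_left]
  rw [key]
  have hsn : Summable (fun n => ‖((n+3)! : ℝ)⁻¹ • (t • M) ^ (n + 3)‖) :=
    (norm_expSeries_summable' (t • M)).comp_injective (add_left_injective 3)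
  calc ‖∑' n, ((n+3)! : ℝ)⁻¹ • (t • M) ^ (n + 3)‖
      ≤ ∑' n, ‖((n+3)! : ℝ)⁻¹ • (t • M) ^ (n + 3)‖ := norm_tsum_le_tsum_norm hsn
    _ ≤ ∑' n, t ^ 3 * (‖M‖ ^ (n+3) / ((n+3)! : ℝ)) := by
        refine Summable.tsum_le_tsum (fun n => ?_) hsn ?_
        · rw [norm_smul ((((n+3)! : ℝ))⁻¹) ((t • M) ^ (n + 3)), Real.norm_eq_abs,
            abs_of_nonneg (by positivity)]
          have h2 : ‖(t • M) ^ (n+3)‖ ≤ (t * ‖M‖) ^ (n + 3) := by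
            calc ‖(t • M) ^ (n+3)‖ ≤ ‖t • M‖ ^ (n+3) := strang_norm_pow_le _ _
            _ = (t * ‖M‖) ^ (n+3) := by rw [norm_smul t M, Real.norm_eq_abs, abs_of_nonneg ht0]
          calc ((n+3)! : ℝ)⁻¹ * ‖(t • M) ^ (n+3)‖
              ≤ ((n+3)! : ℝ)⁻¹ * (t * ‖M‖) ^ (n+3) := by gcongr
          _ = t ^ (n+3) * (‖M‖ ^ (n+3) / ((n+3)! : ℝ)) := by ring
          _ ≤ t ^ 3 * (‖M‖ ^ (n+3) / ((n+3)! : ℝ)) :=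
                mul_le_mul_of_nonneg_right
                  (pow_le_pow_of_le_one ht0 ht1 (Nat.le_add_left 3 n)) (by positivity)
        · exact ((Real.summable_pow_div_factorial ‖M‖).comp_injective
            (add_left_injective 3)).mul_left _
    _ = t ^ 3 * ∑' n, ‖M‖ ^ (n+3) / ((n+3)! : ℝ) := tsum_mul_left
    _ ≤ t ^ 3 * Real.exp ‖M‖ :=
        mul_le_mul_of_nonneg_left (strang_tail_le ‖M‖ (norm_nonneg M)) (by positivity)

lemma strang_algebra (a b : X →L[ℝ] X) (t : ℝ) :
    (1 + t • a + (t ^ 2 / 2) • (a * a)) * (1 + t • b + (t ^ 2 / 2) • (b * b)) *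
        (1 + t • a + (t ^ 2 / 2) • (a * a))
      - (1 + t • ((2:ℝ) • a + b) + (t ^ 2 / 2) • (((2:ℝ) • a + b) * ((2:ℝ) • a + b)))
    = t ^ 3 • (
        (a * b * a + (2⁻¹ : ℝ) • (a * b * b + b * b * a + a * a * b + b * a * a)
          + a * a * a)
      + t • ((4⁻¹ : ℝ) • (b * b * a * a + a * a * b * b + a * a * a * a)
          + (2⁻¹ : ℝ) • (a * b * a * a + a * a * b * a + a * b * b * a))
      + t ^ 2 • ((4⁻¹ : ℝ) • (a * b * b * a * a + a * a * b * b * a + a * a * b * a * a))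
      + t ^ 3 • ((8⁻¹ : ℝ) • (a * a * b * b * a * a))) := by
  simp only [mul_add, add_mul, mul_one, one_mul, smul_mul_assoc, mul_smul_comm, smul_smul,
    smul_add, mul_assoc]
  match_scalars <;> ring

lemma strang_Qnorm_le (M : X →L[ℝ] X) {t : ℝ} (ht0 : 0 ≤ t) (ht1 : t ≤ 1) :
    ‖(1 : X →L[ℝ] X) + t • M + (t ^ 2 / 2) • (M * M)‖ ≤ Real.exp ‖M‖ := by
  have h1 : ‖t • M‖ ≤ ‖M‖ := by
    rw [norm_smul t M, Real.norm_eq_abs, abs_of_nonneg ht0]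
    nlinarith [norm_nonneg M]
  have h2 : ‖(t ^ 2 / 2) • (M * M)‖ ≤ ‖M‖ ^ 2 / 2 := by
    rw [norm_smul (t ^ 2 / 2) (M * M), Real.norm_eq_abs, abs_of_nonneg (by positivity)]
    have := norm_mul_le M M
    nlinarith [norm_nonneg (M * M), norm_nonneg M, pow_le_one₀ ht0 ht1 (n := 2)]
  calc ‖(1 : X →L[ℝ] X) + t • M + (t ^ 2 / 2) • (M * M)‖
      ≤ ‖(1 : X →L[ℝ] X) + t • M‖ + ‖(t ^ 2 / 2) • (M * M)‖ := norm_add_le _ _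
    _ ≤ (‖(1 : X →L[ℝ] X)‖ + ‖t • M‖) + ‖(t ^ 2 / 2) • (M * M)‖ := by
        gcongr; exact norm_add_le _ _
    _ ≤ (1 + ‖M‖) + ‖M‖ ^ 2 / 2 := by gcongr; exact strang_norm_one_le
    _ ≤ Real.exp ‖M‖ := by
        have := strang_quad_le_exp ‖M‖ (norm_nonneg M)
        linarith

end Aux

/-- Second-order accuracy of Strang splitting for bounded linear operators, with a
constant depending only on `‖A‖` and `‖B‖`. -/
theorem strang_splitting_second_order :
    ∃ C : ℝ → ℝ → ℝ,
      (∀ a b : ℝ, 0 < C a b) ∧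
      ∀ (X : Type) [NormedAddCommGroup X] [NormedSpace ℝ X] [CompleteSpace X]
        (A B : X →L[ℝ] X) (Δt : ℝ), Δt ∈ Set.Icc (0:ℝ) 1 →
        ‖exp (Δt • (A + B)) - exp ((Δt / 2) • A) * exp (Δt • B) * exp ((Δt / 2) • A)‖
          ≤ C ‖A‖ ‖B‖ * Δt ^ 3 := by
  refine ⟨fun x y => 5 * Real.exp (|x| + |y|) + 9 * (1 + |x| + |y|) ^ 6,
    fun x y => by positivity, ?_⟩
  intro X _ _ _ A B t hmem
  obtain ⟨ht0, ht1⟩ := hmem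
  obtain ⟨a, ha_def⟩ : ∃ a : X →L[ℝ] X, a = (2⁻¹ : ℝ) • A := ⟨_, rfl⟩
  obtain ⟨b, hb_def⟩ : ∃ b : X →L[ℝ] X, b = B := ⟨_, rfl⟩
  have hA : A = (2:ℝ) • a := by rw [ha_def, smul_smul]; norm_num
  have hta : (t / 2) • A = t • a := by
    rw [ha_def, smul_smul]
    congr 1
  have hna : ‖a‖ = ‖A‖ / 2 := by
    rw [ha_def, norm_smul (2⁻¹ : ℝ) A, Real.norm_eq_abs,
      abs_of_nonneg (by norm_num : (0:ℝ) ≤ (2⁻¹:ℝ))]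
    ring
  -- notation
  obtain ⟨Qa, hQa⟩ : ∃ Q : X →L[ℝ] X, Q = 1 + t • a + (t ^ 2 / 2) • (a * a) := ⟨_, rfl⟩
  obtain ⟨Qb, hQb⟩ : ∃ Q : X →L[ℝ] X, Q = 1 + t • b + (t ^ 2 / 2) • (b * b) := ⟨_, rfl⟩
  obtain ⟨S, hSdef⟩ : ∃ S : X →L[ℝ] X, S = (2:ℝ) • a + b := ⟨_, rfl⟩
  obtain ⟨Qs, hQs⟩ : ∃ Q : X →L[ℝ] X, Q = 1 + t • S + (t ^ 2 / 2) • (S * S) := ⟨_, rfl⟩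
  obtain ⟨u, hu⟩ : ∃ u : X →L[ℝ] X, u = exp (t • a) := ⟨_, rfl⟩
  obtain ⟨v, hv⟩ : ∃ v : X →L[ℝ] X, v = exp (t • b) := ⟨_, rfl⟩
  have hSAB : A + B = S := by rw [hSdef, ← hA, hb_def]
  -- Taylor remainders
  have hRu : ‖u - Qa‖ ≤ t ^ 3 * Real.exp ‖a‖ := by
    rw [hu, hQa]; exact strang_exp_taylor2 a ht0 ht1
  have hRv : ‖v - Qb‖ ≤ t ^ 3 * Real.exp ‖b‖ := by
    rw [hv, hQb]; exact strang_exp_taylor2 b ht0 ht1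
  have hRS : ‖exp (t • S) - Qs‖ ≤ t ^ 3 * Real.exp ‖S‖ := by
    rw [hQs]; exact strang_exp_taylor2 S ht0 ht1
  -- norms of the factors
  have htM : ∀ M : X →L[ℝ] X, ‖t • M‖ ≤ ‖M‖ := by
    intro M
    rw [norm_smul t M, Real.norm_eq_abs, abs_of_nonneg ht0]
    nlinarith [norm_nonneg M]
  have hun : ‖u‖ ≤ Real.exp ‖a‖ := by
    rw [hu]; exact (strang_norm_exp_le (t • a)).trans (Real.exp_le_exp.2 (htM a))
  have hvn : ‖v‖ ≤ Real.exp ‖b‖ := by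
    rw [hv]; exact (strang_norm_exp_le (t • b)).trans (Real.exp_le_exp.2 (htM b))
  have hQan : ‖Qa‖ ≤ Real.exp ‖a‖ := by rw [hQa]; exact strang_Qnorm_le a ht0 ht1
  have hQbn : ‖Qb‖ ≤ Real.exp ‖b‖ := by rw [hQb]; exact strang_Qnorm_le b ht0 ht1
  -- the three cross terms
  have hcross : ‖u * v * u - Qa * Qb * Qa‖
      ≤ 3 * (t ^ 3 * (Real.exp ‖a‖ * Real.exp ‖b‖ * Real.exp ‖a‖)) := by
    have hid : u * v * u - Qa * Qb * Qa
        = (u - Qa) * (v * u) + Qa * ((v - Qb) * u) + Qa * Qb * (u - Qa) := by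
      noncomm_ring
    have e1 : ‖(u - Qa) * (v * u)‖ ≤ (t ^ 3 * Real.exp ‖a‖) * (Real.exp ‖b‖ * Real.exp ‖a‖) := by
      refine (norm_mul_le _ _).trans ?_
      have h2 : ‖v * u‖ ≤ Real.exp ‖b‖ * Real.exp ‖a‖ :=
        (norm_mul_le _ _).trans (mul_le_mul hvn hun (norm_nonneg _) (Real.exp_pos _).le)
      exact mul_le_mul hRu h2 (norm_nonneg _) (by positivity)
    have e2 : ‖Qa * ((v - Qb) * u)‖
        ≤ Real.exp ‖a‖ * ((t ^ 3 * Real.exp ‖b‖) * Real.exp ‖a‖) := by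
      refine (norm_mul_le _ _).trans ?_
      have h2 : ‖(v - Qb) * u‖ ≤ (t ^ 3 * Real.exp ‖b‖) * Real.exp ‖a‖ :=
        (norm_mul_le _ _).trans (mul_le_mul hRv hun (norm_nonneg _) (by positivity))
      exact mul_le_mul hQan h2 (norm_nonneg _) (Real.exp_pos _).le
    have e3 : ‖Qa * Qb * (u - Qa)‖
        ≤ (Real.exp ‖a‖ * Real.exp ‖b‖) * (t ^ 3 * Real.exp ‖a‖) := by
      refine (norm_mul_le _ _).trans ?_
      have h1 : ‖Qa * Qb‖ ≤ Real.exp ‖a‖ * Real.exp ‖b‖ :=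
        (norm_mul_le _ _).trans (mul_le_mul hQan hQbn (norm_nonneg _) (Real.exp_pos _).le)
      exact mul_le_mul h1 hRu (norm_nonneg _) (by positivity)
    have e1' : ‖(u - Qa) * (v * u)‖
        ≤ t ^ 3 * (Real.exp ‖a‖ * Real.exp ‖b‖ * Real.exp ‖a‖) := e1.trans (le_of_eq (by ring))
    have e2' : ‖Qa * ((v - Qb) * u)‖
        ≤ t ^ 3 * (Real.exp ‖a‖ * Real.exp ‖b‖ * Real.exp ‖a‖) := e2.trans (le_of_eq (by ring))
    have e3' : ‖Qa * Qb * (u - Qa)‖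
        ≤ t ^ 3 * (Real.exp ‖a‖ * Real.exp ‖b‖ * Real.exp ‖a‖) := e3.trans (le_of_eq (by ring))
    calc ‖u * v * u - Qa * Qb * Qa‖
        = ‖(u - Qa) * (v * u) + Qa * ((v - Qb) * u) + Qa * Qb * (u - Qa)‖ := by rw [hid]
      _ ≤ ‖(u - Qa) * (v * u) + Qa * ((v - Qb) * u)‖ + ‖Qa * Qb * (u - Qa)‖ := norm_add_le _ _
      _ ≤ (‖(u - Qa) * (v * u)‖ + ‖Qa * ((v - Qb) * u)‖) + ‖Qa * Qb * (u - Qa)‖ := by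
          gcongr; exact norm_add_le _ _
      _ ≤ 3 * (t ^ 3 * (Real.exp ‖a‖ * Real.exp ‖b‖ * Real.exp ‖a‖)) := by
          linarith [e1', e2', e3']
  -- the algebraic discrepancy
  obtain ⟨m, hm⟩ : ∃ m : ℝ, m = 1 + ‖a‖ + ‖b‖ := ⟨_, rfl⟩
  have hm1 : (1:ℝ) ≤ m := by
    have := norm_nonneg a; have := norm_nonneg b; rw [hm]; linarith
  have hm0 : (0:ℝ) ≤ m := le_trans zero_le_one hm1
  have ham : ‖a‖ ≤ m := by have := norm_nonneg b; rw [hm]; linarith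
  have hbm : ‖b‖ ≤ m := by have := norm_nonneg a; rw [hm]; linarith
  have step : ∀ (x y : X →L[ℝ] X) (c : ℝ), ‖x‖ ≤ c → ‖y‖ ≤ m → ‖x * y‖ ≤ c * m := by
    intro x y c hx hy
    exact (norm_mul_le x y).trans
      (mul_le_mul hx hy (norm_nonneg y) (le_trans (norm_nonneg x) hx))
  have hpow : ∀ k : ℕ, k ≤ 6 → m ^ k ≤ m ^ 6 := fun k hk => pow_le_pow_right₀ hm1 hk
  -- bounds for the individual monomials (all ≤ m ^ 6)
  have h3a : ‖a * b * a‖ ≤ m ^ 6 := by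
    have := step _ a (m * m) (step a b m ham hbm) ham
    calc ‖a * b * a‖ ≤ m * m * m := this
      _ = m ^ 3 := by ring
      _ ≤ m ^ 6 := hpow 3 (by norm_num)
  have h3b : ‖a * b * b‖ ≤ m ^ 6 := by
    have := step _ b (m * m) (step a b m ham hbm) hbm
    calc ‖a * b * b‖ ≤ m * m * m := this
      _ = m ^ 3 := by ring
      _ ≤ m ^ 6 := hpow 3 (by norm_num)
  have h3c : ‖b * b * a‖ ≤ m ^ 6 := by
    have := step _ a (m * m) (step b b m hbm hbm) ham
    calc ‖b * b * a‖ ≤ m * m * m := this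
      _ = m ^ 3 := by ring
      _ ≤ m ^ 6 := hpow 3 (by norm_num)
  have h3d : ‖a * a * b‖ ≤ m ^ 6 := by
    have := step _ b (m * m) (step a a m ham ham) hbm
    calc ‖a * a * b‖ ≤ m * m * m := this
      _ = m ^ 3 := by ring
      _ ≤ m ^ 6 := hpow 3 (by norm_num)
  have h3e : ‖b * a * a‖ ≤ m ^ 6 := by
    have := step _ a (m * m) (step b a m hbm ham) ham
    calc ‖b * a * a‖ ≤ m * m * m := this
      _ = m ^ 3 := by ring
      _ ≤ m ^ 6 := hpow 3 (by norm_num)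
  have h3f : ‖a * a * a‖ ≤ m ^ 6 := by
    have := step _ a (m * m) (step a a m ham ham) ham
    calc ‖a * a * a‖ ≤ m * m * m := this
      _ = m ^ 3 := by ring
      _ ≤ m ^ 6 := hpow 3 (by norm_num)
  have h4a : ‖b * b * a * a‖ ≤ m ^ 6 := by
    have := step _ a (m * m * m) (step _ a (m * m) (step b b m hbm hbm) ham) ham
    calc ‖b * b * a * a‖ ≤ m * m * m * m := this
      _ = m ^ 4 := by ring
      _ ≤ m ^ 6 := hpow 4 (by norm_num)
  have h4b : ‖a * a * b * b‖ ≤ m ^ 6 := by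
    have := step _ b (m * m * m) (step _ b (m * m) (step a a m ham ham) hbm) hbm
    calc ‖a * a * b * b‖ ≤ m * m * m * m := this
      _ = m ^ 4 := by ring
      _ ≤ m ^ 6 := hpow 4 (by norm_num)
  have h4c : ‖a * a * a * a‖ ≤ m ^ 6 := by
    have := step _ a (m * m * m) (step _ a (m * m) (step a a m ham ham) ham) ham
    calc ‖a * a * a * a‖ ≤ m * m * m * m := this
      _ = m ^ 4 := by ring
      _ ≤ m ^ 6 := hpow 4 (by norm_num)
  have h4d : ‖a * b * a * a‖ ≤ m ^ 6 := by
    have := step _ a (m * m * m) (step _ a (m * m) (step a b m ham hbm) ham) ham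
    calc ‖a * b * a * a‖ ≤ m * m * m * m := this
      _ = m ^ 4 := by ring
      _ ≤ m ^ 6 := hpow 4 (by norm_num)
  have h4e : ‖a * a * b * a‖ ≤ m ^ 6 := by
    have := step _ a (m * m * m) (step _ b (m * m) (step a a m ham ham) hbm) ham
    calc ‖a * a * b * a‖ ≤ m * m * m * m := this
      _ = m ^ 4 := by ring
      _ ≤ m ^ 6 := hpow 4 (by norm_num)
  have h4f : ‖a * b * b * a‖ ≤ m ^ 6 := by
    have := step _ a (m * m * m) (step _ b (m * m) (step a b m ham hbm) hbm) ham
    calc ‖a * b * b * a‖ ≤ m * m * m * m := this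
      _ = m ^ 4 := by ring
      _ ≤ m ^ 6 := hpow 4 (by norm_num)
  have h5a : ‖a * b * b * a * a‖ ≤ m ^ 6 := by
    have := step _ a (m * m * m * m)
      (step _ a (m * m * m) (step _ b (m * m) (step a b m ham hbm) hbm) ham) ham
    calc ‖a * b * b * a * a‖ ≤ m * m * m * m * m := this
      _ = m ^ 5 := by ring
      _ ≤ m ^ 6 := hpow 5 (by norm_num)
  have h5b : ‖a * a * b * b * a‖ ≤ m ^ 6 := by
    have := step _ a (m * m * m * m)
      (step _ b (m * m * m) (step _ b (m * m) (step a a m ham ham) hbm) hbm) ham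
    calc ‖a * a * b * b * a‖ ≤ m * m * m * m * m := this
      _ = m ^ 5 := by ring
      _ ≤ m ^ 6 := hpow 5 (by norm_num)
  have h5c : ‖a * a * b * a * a‖ ≤ m ^ 6 := by
    have := step _ a (m * m * m * m)
      (step _ a (m * m * m) (step _ b (m * m) (step a a m ham ham) hbm) ham) ham
    calc ‖a * a * b * a * a‖ ≤ m * m * m * m * m := this
      _ = m ^ 5 := by ring
      _ ≤ m ^ 6 := hpow 5 (by norm_num)
  have h6a : ‖a * a * b * b * a * a‖ ≤ m ^ 6 := by
    have := step _ a (m * m * m * m * m)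
      (step _ a (m * m * m * m)
        (step _ b (m * m * m) (step _ b (m * m) (step a a m ham ham) hbm) hbm) ham) ham
    calc ‖a * a * b * b * a * a‖ ≤ m * m * m * m * m * m := this
      _ = m ^ 6 := by ring
  -- the polynomial discrepancy bound
  have halg : ‖Qa * Qb * Qa - Qs‖ ≤ t ^ 3 * (9 * m ^ 6) := by
    rw [hQa, hQb, hQs, hSdef]
    rw [strang_algebra a b t]
    set D3 : X →L[ℝ] X := a * b * a
      + (2⁻¹ : ℝ) • (a * b * b + b * b * a + a * a * b + b * a * a) + a * a * a with hD3
    set D4 : X →L[ℝ] X := (4⁻¹ : ℝ) • (b * b * a * a + a * a * b * b + a * a * a * a)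
      + (2⁻¹ : ℝ) • (a * b * a * a + a * a * b * a + a * b * b * a) with hD4
    set D5 : X →L[ℝ] X :=
      (4⁻¹ : ℝ) • (a * b * b * a * a + a * a * b * b * a + a * a * b * a * a) with hD5
    set D6 : X →L[ℝ] X := (8⁻¹ : ℝ) • (a * a * b * b * a * a) with hD6
    have hn3 : ‖D3‖ ≤ 4 * m ^ 6 := by
      calc ‖D3‖ ≤ ‖a * b * a + (2⁻¹ : ℝ) • (a * b * b + b * b * a + a * a * b + b * a * a)‖
            + ‖a * a * a‖ := norm_add_le _ _
        _ ≤ (‖a * b * a‖ + ‖(2⁻¹ : ℝ) • (a * b * b + b * b * a + a * a * b + b * a * a)‖)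
            + ‖a * a * a‖ := by gcongr; exact norm_add_le _ _
        _ ≤ (m ^ 6 + 2⁻¹ * (m ^ 6 + m ^ 6 + m ^ 6 + m ^ 6)) + m ^ 6 := by
            gcongr
            rw [norm_smul (2⁻¹ : ℝ) (a * b * b + b * b * a + a * a * b + b * a * a),
              Real.norm_eq_abs, abs_of_nonneg (by norm_num : (0:ℝ) ≤ 2⁻¹)]
            gcongr
            calc ‖a * b * b + b * b * a + a * a * b + b * a * a‖
                ≤ ‖a * b * b‖ + ‖b * b * a‖ + ‖a * a * b‖ + ‖b * a * a‖ := by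
                  refine (norm_add_le _ _).trans ?_
                  gcongr
                  refine (norm_add_le _ _).trans ?_
                  gcongr
                  exact norm_add_le _ _
              _ ≤ m ^ 6 + m ^ 6 + m ^ 6 + m ^ 6 := by gcongr
          _ = 4 * m ^ 6 := by ring
    have hn4 : ‖D4‖ ≤ 3 * m ^ 6 := by
      calc ‖D4‖ ≤ ‖(4⁻¹ : ℝ) • (b * b * a * a + a * a * b * b + a * a * a * a)‖
            + ‖(2⁻¹ : ℝ) • (a * b * a * a + a * a * b * a + a * b * b * a)‖ := norm_add_le _ _
        _ ≤ 4⁻¹ * (m ^ 6 + m ^ 6 + m ^ 6) + 2⁻¹ * (m ^ 6 + m ^ 6 + m ^ 6) := by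
            gcongr ?_ + ?_
            · rw [norm_smul (4⁻¹ : ℝ) (b * b * a * a + a * a * b * b + a * a * a * a),
                Real.norm_eq_abs, abs_of_nonneg (by norm_num : (0:ℝ) ≤ 4⁻¹)]
              gcongr
              calc ‖b * b * a * a + a * a * b * b + a * a * a * a‖
                  ≤ ‖b * b * a * a‖ + ‖a * a * b * b‖ + ‖a * a * a * a‖ := by
                    refine (norm_add_le _ _).trans ?_; gcongr; exact norm_add_le _ _
                _ ≤ m ^ 6 + m ^ 6 + m ^ 6 := by gcongr
            · rw [norm_smul (2⁻¹ : ℝ) (a * b * a * a + a * a * b * a + a * b * b * a),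
                Real.norm_eq_abs, abs_of_nonneg (by norm_num : (0:ℝ) ≤ 2⁻¹)]
              gcongr
              calc ‖a * b * a * a + a * a * b * a + a * b * b * a‖
                  ≤ ‖a * b * a * a‖ + ‖a * a * b * a‖ + ‖a * b * b * a‖ := by
                    refine (norm_add_le _ _).trans ?_; gcongr; exact norm_add_le _ _
                _ ≤ m ^ 6 + m ^ 6 + m ^ 6 := by gcongr
        _ ≤ 3 * m ^ 6 := by linarith [pow_nonneg hm0 6]
    have hn5 : ‖D5‖ ≤ m ^ 6 := by
      rw [hD5, norm_smul (4⁻¹ : ℝ) (a * b * b * a * a + a * a * b * b * a + a * a * b * a * a),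
        Real.norm_eq_abs, abs_of_nonneg (by norm_num : (0:ℝ) ≤ 4⁻¹)]
      have : ‖a * b * b * a * a + a * a * b * b * a + a * a * b * a * a‖
          ≤ m ^ 6 + m ^ 6 + m ^ 6 := by
        calc ‖a * b * b * a * a + a * a * b * b * a + a * a * b * a * a‖
            ≤ ‖a * b * b * a * a‖ + ‖a * a * b * b * a‖ + ‖a * a * b * a * a‖ := by
              refine (norm_add_le _ _).trans ?_; gcongr; exact norm_add_le _ _
          _ ≤ m ^ 6 + m ^ 6 + m ^ 6 := by gcongr
      linarith [pow_nonneg hm0 6, this]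
    have hn6 : ‖D6‖ ≤ m ^ 6 := by
      rw [hD6, norm_smul (8⁻¹ : ℝ) (a * a * b * b * a * a),
        Real.norm_eq_abs, abs_of_nonneg (by norm_num : (0:ℝ) ≤ 8⁻¹)]
      linarith [pow_nonneg hm0 6, h6a]
    have htpow : ∀ k : ℕ, t ^ k ≤ 1 := fun k => pow_le_one₀ ht0 ht1
    have hG : ‖D3 + t • D4 + t ^ 2 • D5 + t ^ 3 • D6‖ ≤ 9 * m ^ 6 := by
      calc ‖D3 + t • D4 + t ^ 2 • D5 + t ^ 3 • D6‖
          ≤ ‖D3‖ + ‖t • D4‖ + ‖t ^ 2 • D5‖ + ‖t ^ 3 • D6‖ := by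
            refine (norm_add_le _ _).trans ?_; gcongr
            refine (norm_add_le _ _).trans ?_; gcongr
            exact norm_add_le _ _
        _ ≤ 4 * m ^ 6 + 1 * (3 * m ^ 6) + 1 * (m ^ 6) + 1 * (m ^ 6) := by
            have d4 : ‖t • D4‖ ≤ 1 * (3 * m ^ 6) := by
              rw [norm_smul t D4, Real.norm_eq_abs, abs_of_nonneg ht0]
              exact mul_le_mul (by simpa using htpow 1) hn4 (norm_nonneg _) zero_le_one
            have d5 : ‖t ^ 2 • D5‖ ≤ 1 * m ^ 6 := by
              rw [norm_smul (t ^ 2) D5, Real.norm_eq_abs, abs_of_nonneg (by positivity)]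
              exact mul_le_mul (htpow 2) hn5 (norm_nonneg _) zero_le_one
            have d6 : ‖t ^ 3 • D6‖ ≤ 1 * m ^ 6 := by
              rw [norm_smul (t ^ 3) D6, Real.norm_eq_abs, abs_of_nonneg (by positivity)]
              exact mul_le_mul (htpow 3) hn6 (norm_nonneg _) zero_le_one
            gcongr
        _ = 9 * m ^ 6 := by ring
    rw [norm_smul (t ^ 3) (D3 + t • D4 + t ^ 2 • D5 + t ^ 3 • D6),
      Real.norm_eq_abs, abs_of_nonneg (by positivity)]
    exact mul_le_mul_of_nonneg_left hG (by positivity)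
  -- put the pieces together
  have hSn : ‖S‖ ≤ ‖A‖ + ‖B‖ := by
    rw [hSdef]
    refine (norm_add_le _ _).trans ?_
    rw [norm_smul (2:ℝ) a, Real.norm_eq_abs, hna, hb_def]
    rw [abs_of_nonneg (by norm_num : (0:ℝ) ≤ 2)]
    linarith [norm_nonneg A]
  have hfinal : ‖exp (t • (A + B)) - exp ((t / 2) • A) * exp (t • B) * exp ((t / 2) • A)‖
      ≤ t ^ 3 * (Real.exp ‖S‖ + 3 * (Real.exp ‖a‖ * Real.exp ‖b‖ * Real.exp ‖a‖) + 9 * m ^ 6) := by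
    rw [hSAB, hta, show B = b from hb_def.symm, ← hu, ← hv]
    have hdecomp : exp (t • S) - u * v * u
        = (exp (t • S) - Qs) - (u * v * u - Qa * Qb * Qa) - (Qa * Qb * Qa - Qs) := by
      abel
    calc ‖exp (t • S) - u * v * u‖
        = ‖(exp (t • S) - Qs) - (u * v * u - Qa * Qb * Qa) - (Qa * Qb * Qa - Qs)‖ := by
          rw [hdecomp]
      _ ≤ ‖(exp (t • S) - Qs) - (u * v * u - Qa * Qb * Qa)‖ + ‖Qa * Qb * Qa - Qs‖ :=
          norm_sub_le _ _
      _ ≤ (‖exp (t • S) - Qs‖ + ‖u * v * u - Qa * Qb * Qa‖) + ‖Qa * Qb * Qa - Qs‖ := by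
          gcongr; exact norm_sub_le _ _
      _ ≤ (t ^ 3 * Real.exp ‖S‖ + 3 * (t ^ 3 * (Real.exp ‖a‖ * Real.exp ‖b‖ * Real.exp ‖a‖)))
          + t ^ 3 * (9 * m ^ 6) := by gcongr
      _ = t ^ 3 * (Real.exp ‖S‖ + 3 * (Real.exp ‖a‖ * Real.exp ‖b‖ * Real.exp ‖a‖)
          + 9 * m ^ 6) := by ring
  refine hfinal.trans ?_
  rw [mul_comm _ (t ^ 3)]
  refine mul_le_mul_of_nonneg_left ?_ (by positivity : (0:ℝ) ≤ t ^ 3)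
  beta_reduce
  -- compare constants
  have habsA : |‖A‖| = ‖A‖ := abs_of_nonneg (norm_nonneg A)
  have habsB : |‖B‖| = ‖B‖ := abs_of_nonneg (norm_nonneg B)
  rw [habsA, habsB]
  have c1 : Real.exp ‖S‖ ≤ Real.exp (‖A‖ + ‖B‖) := Real.exp_le_exp.2 hSn
  have c2 : Real.exp ‖a‖ * Real.exp ‖b‖ * Real.exp ‖a‖ ≤ Real.exp (‖A‖ + ‖B‖) := by
    rw [← Real.exp_add, ← Real.exp_add]
    refine Real.exp_le_exp.2 ?_
    rw [hna, hb_def]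
    nlinarith [norm_nonneg A]
  have c3 : m ^ 6 ≤ (1 + ‖A‖ + ‖B‖) ^ 6 := by
    refine pow_le_pow_left₀ hm0 ?_ 6
    rw [hm, hna, hb_def]
    nlinarith [norm_nonneg A]
  linarith [c1, c2, c3, (Real.exp_pos (‖A‖ + ‖B‖)).le]
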